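/- Let f₀, f₁, …, f_s be proper lsc with fᵢ(x̄) < ∞ for some x̄ and fᵢ ≥ −η for all i, let p, p^ν ∈ Δ with ‖p^ν − p‖₂ → 0 and θ ≥ 0. Define f(u,x) = f₀(x) + Σᵢ (pᵢ+uᵢ) fᵢ(x) + θ‖u‖₁ + ι_Δ(p+u) and f^ν(u,x) = f₀(x) + Σᵢ (pᵢ^ν+uᵢ) fᵢ(x) + θ‖u‖₁ + ι_Δ(p^ν+u). Then f^ν epi-converges to f for every θ ≥ 0. -/

import Mathlib

open Filter Topology
open scoped Classical

/-- Weighted sum `Σᵢ cᵢ aᵢ` of extended reals `aᵢ ∈ (−∞,∞]` with weights `cᵢ ∈ ℝ`, under the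
conventions `0·∞ = 0` and `∞ − ∞ = ∞`. -/
noncomputable def wsumE {s : ℕ} (c : Fin s → ℝ) (a : Fin s → EReal) : EReal :=
  if ∃ i, c i ≠ 0 ∧ a i = ⊤ then ⊤ else ((∑ i, c i * (a i).toReal : ℝ) : EReal)

private lemma ne_bot_of_lb' {η : ℝ} {a : EReal} (h : ((-η : ℝ) : EReal) ≤ a) : a ≠ ⊥ := by
  intro hb
  rw [hb, le_bot_iff] at h
  exact EReal.coe_ne_bot _ h

private lemma toReal_ge_neg' {η : ℝ} (hη : 0 ≤ η) {a : EReal} (h : ((-η : ℝ) : EReal) ≤ a) :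
    -η ≤ a.toReal := by
  induction a using EReal.rec with
  | bot => exact absurd (le_bot_iff.mp h) (EReal.coe_ne_bot _)
  | coe x => exact_mod_cast h
  | top => simpa using neg_nonpos.mpr hη

private lemma wsumE_lb {s : ℕ} {c : Fin s → ℝ} {a : Fin s → EReal} {η B : ℝ}
    (hη : 0 ≤ η) (hc : ∀ i, 0 ≤ c i) (ha : ∀ i, ((-η : ℝ) : EReal) ≤ a i)
    (hB : ∑ i, c i ≤ B) : ((-(B * η) : ℝ) : EReal) ≤ wsumE c a := by
  rw [wsumE]
  split
  · exact le_top
  · rw [EReal.coe_le_coe_iff]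
    have h0 : (0:ℝ) ≤ ∑ i, c i := Finset.sum_nonneg fun i _ => hc i
    calc -(B * η) ≤ -((∑ i, c i) * η) := by nlinarith
      _ = ∑ i, c i * (-η) := by rw [← Finset.sum_mul]; ring
      _ ≤ ∑ i, c i * (a i).toReal :=
          Finset.sum_le_sum fun i _ => mul_le_mul_of_nonneg_left (toReal_ge_neg' hη (ha i)) (hc i)

private lemma key_liminf {s n : ℕ}
    (f₀ : EuclideanSpace ℝ (Fin n) → EReal)
    (F : Fin s → EuclideanSpace ℝ (Fin n) → EReal)
    (hf₀lsc : LowerSemicontinuous f₀) (hFlsc : ∀ i, LowerSemicontinuous (F i))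
    {η : ℝ} (hη : 0 ≤ η)
    (hlb0 : ∀ x, ((-η : ℝ) : EReal) ≤ f₀ x) (hlbF : ∀ i x, ((-η : ℝ) : EReal) ≤ F i x)
    {q : Fin s → ℝ} (hq : ∀ i, 0 ≤ q i)
    {x : EuclideanSpace ℝ (Fin n)} {xseq : ℕ → EuclideanSpace ℝ (Fin n)}
    (hx : Tendsto xseq atTop (𝓝 x))
    {qseq : ℕ → Fin s → ℝ} (hqc : ∀ i, Tendsto (fun ν => qseq ν i) atTop (𝓝 (q i)))
    {m : ℝ} (hm : (m : EReal) < f₀ x + wsumE q (fun i => F i x)) :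
    ∀ᶠ ν in atTop, (∀ i, 0 ≤ qseq ν i) →
      (m : EReal) ≤ f₀ (xseq ν) + wsumE (qseq ν) (fun i => F i (xseq ν)) := by
  have hne0 : ∀ y, f₀ y ≠ ⊥ := fun y => ne_bot_of_lb' (hlb0 y)
  have hneF : ∀ i y, F i y ≠ ⊥ := fun i y => ne_bot_of_lb' (hlbF i y)
  set B : ℝ := ∑ i, q i + 1 with hB
  have hq0 : (0:ℝ) ≤ ∑ i, q i := Finset.sum_nonneg fun i _ => hq i
  have hB0 : 0 ≤ B := by linarith
  have hsumt : Tendsto (fun ν => ∑ i, qseq ν i) atTop (𝓝 (∑ i, q i)) :=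
    tendsto_finset_sum _ fun i _ => hqc i
  have evB : ∀ᶠ ν in atTop, ∑ i, qseq ν i ≤ B :=
    (hsumt.eventually_lt_const (by linarith : ∑ i, q i < B)).mono fun ν h => h.le
  clear_value B
  by_cases htop0 : f₀ x = ⊤
  · -- f₀ x = ⊤
    have hev1 : ∀ᶠ ν in atTop, ((m + B * η : ℝ) : EReal) < f₀ (xseq ν) :=
      hx.eventually (hf₀lsc x _ (by show f₀ x > _; rw [htop0]; exact EReal.coe_lt_top _))
    filter_upwards [hev1, evB] with ν h1 h2 hpos
    have hw := wsumE_lb (a := fun i => F i (xseq ν)) hη hpos (fun i => hlbF i _) h2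
    have hme : (m : EReal) = ((m + B*η : ℝ) : EReal) + ((-(B*η) : ℝ) : EReal) := by
      rw [← EReal.coe_add]; norm_num
    rw [hme]
    exact add_le_add h1.le hw
  · by_cases htopF : ∃ i, q i ≠ 0 ∧ F i x = ⊤
    · -- some F i x = ⊤ with positive weight
      obtain ⟨i₀, hi₀, hFi₀⟩ := htopF
      have hqi₀ : 0 < q i₀ := (hq i₀).lt_of_ne (Ne.symm hi₀)
      set M : ℝ := max 0 (m + η + B * η) * (2 / q i₀) with hM
      have hM0 : 0 ≤ M := mul_nonneg (le_max_left _ _) (by positivity)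
      have hMkey : m + η + B * η ≤ q i₀ / 2 * M := by
        rw [hM, show q i₀ / 2 * (max 0 (m + η + B*η) * (2 / q i₀)) = max 0 (m + η + B*η) by
          field_simp]
        exact le_max_right _ _
      clear_value M
      have hev1 : ∀ᶠ ν in atTop, (M : EReal) < F i₀ (xseq ν) :=
        hx.eventually (hFlsc i₀ x _ (by show F i₀ x > _; rw [hFi₀]; exact EReal.coe_lt_top _))
      have hev2 : ∀ᶠ ν in atTop, q i₀ / 2 < qseq ν i₀ :=
        (hqc i₀).eventually_const_lt (by linarith)
      filter_upwards [hev1, hev2, evB] with ν h1 h2 hBν hpos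
      rw [wsumE]
      split
      · rw [EReal.add_top_of_ne_bot (hne0 _)]; exact le_top
      · rename_i hw
        push_neg at hw
        have hFν : F i₀ (xseq ν) ≠ ⊤ := hw i₀ (by intro h0; rw [h0] at h2; linarith)
        have ht₀ : M < (F i₀ (xseq ν)).toReal := by
          rw [← EReal.coe_lt_coe_iff, EReal.coe_toReal hFν (hneF _ _)]; exact h1
        have hsum : m + η ≤ ∑ i, qseq ν i * (F i (xseq ν)).toReal := by
          have hsplit : ∑ i, qseq ν i * (F i (xseq ν)).toReal
              = (∑ i ∈ Finset.univ.erase i₀, qseq ν i * (F i (xseq ν)).toReal)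
                + qseq ν i₀ * (F i₀ (xseq ν)).toReal :=
            (Finset.sum_erase_add _ _ (Finset.mem_univ i₀)).symm
          have h₁ : q i₀ / 2 * M ≤ qseq ν i₀ * (F i₀ (xseq ν)).toReal :=
            mul_le_mul h2.le ht₀.le hM0 (by linarith)
          have hsub : ∑ i ∈ Finset.univ.erase i₀, qseq ν i ≤ ∑ i, qseq ν i :=
            Finset.sum_le_sum_of_subset_of_nonneg (Finset.erase_subset _ _)
              (fun i _ _ => hpos i)
          have hsub0 : (0:ℝ) ≤ ∑ i ∈ Finset.univ.erase i₀, qseq ν i :=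
            Finset.sum_nonneg fun i _ => hpos i
          have h₂ : -(B * η) ≤ ∑ i ∈ Finset.univ.erase i₀, qseq ν i * (F i (xseq ν)).toReal := by
            calc -(B*η) ≤ -((∑ i ∈ Finset.univ.erase i₀, qseq ν i) * η) := by nlinarith
              _ = ∑ i ∈ Finset.univ.erase i₀, qseq ν i * (-η) := by rw [← Finset.sum_mul]; ring
              _ ≤ _ := Finset.sum_le_sum fun i _ =>
                  mul_le_mul_of_nonneg_left (toReal_ge_neg' hη (hlbF i _)) (hpos i)
          rw [hsplit]; linarith [h₁, h₂, hMkey]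
        have hme : (m : EReal) = ((-η : ℝ) : EReal) + ((m + η : ℝ) : EReal) := by
          rw [← EReal.coe_add]; norm_num
        rw [hme]
        exact add_le_add (hlb0 _) (EReal.coe_le_coe_iff.mpr hsum)
    · -- everything with positive weight is finite at x
      push_neg at htopF
      set t : Fin s → ℝ := fun i => if q i = 0 then -η else (F i x).toReal with ht
      have hwx : wsumE q (fun i => F i x) = ((∑ i, q i * t i : ℝ) : EReal) := by
        rw [wsumE, if_neg (by push_neg; exact htopF)]
        refine congrArg _ (Finset.sum_congr rfl fun i _ => ?_)
        by_cases h0 : q i = 0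
        · simp [ht, h0]
        · simp [ht, h0]
      have hf₀ne : f₀ x ≠ ⊥ := hne0 x
      set r : ℝ := (f₀ x).toReal + ∑ i, q i * t i with hr
      have hmr : m < r := by
        rw [hwx, ← EReal.coe_toReal htop0 hf₀ne, ← EReal.coe_add, EReal.coe_lt_coe_iff] at hm
        exact hm
      set C : ℝ := ∑ i, |t i| + ∑ i, q i + s with hC
      have habs0 : (0:ℝ) ≤ ∑ i, |t i| := Finset.sum_nonneg fun i _ => abs_nonneg _
      have hs0 : (0:ℝ) ≤ (s:ℝ) := Nat.cast_nonneg s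
      have hC0 : 0 ≤ C := by rw [hC]; linarith
      set ε : ℝ := min 1 ((r - m) / (2 * (1 + C))) with hε
      have hε0 : 0 < ε := lt_min one_pos (div_pos (by linarith) (by linarith))
      have hε1 : ε ≤ 1 := min_le_left _ _
      have hεC : ε * (1 + C) ≤ (r - m) / 2 := by
        have h2 : ε ≤ (r - m) / (2 * (1 + C)) := min_le_right _ _
        calc ε * (1+C) ≤ (r - m)/(2*(1+C)) * (1+C) :=
              mul_le_mul_of_nonneg_right h2 (by linarith)
          _ = (r-m)/2 := by field_simp
      clear_value t r C ε
      have hev0 : ∀ᶠ ν in atTop, (((f₀ x).toReal - ε : ℝ) : EReal) < f₀ (xseq ν) := by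
        refine hx.eventually (hf₀lsc x _ ?_)
        show (((f₀ x).toReal - ε : ℝ) : EReal) < f₀ x
        rw [← EReal.coe_toReal htop0 hf₀ne, EReal.coe_lt_coe_iff]
        simp only [EReal.toReal_coe]
        linarith
      have hev1 : ∀ᶠ ν in atTop, ∀ i, ((t i - ε : ℝ) : EReal) < F i (xseq ν) := by
        rw [eventually_all]
        intro i
        refine hx.eventually (hFlsc i x _ ?_)
        by_cases h0 : q i = 0
        · refine lt_of_lt_of_le ?_ (hlbF i x)
          rw [EReal.coe_lt_coe_iff]
          simp only [ht, h0, if_pos]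
          linarith
        · have hne : F i x ≠ ⊤ := htopF i h0
          show ((t i - ε : ℝ) : EReal) < F i x
          rw [← EReal.coe_toReal hne (hneF i x), EReal.coe_lt_coe_iff]
          simp only [ht, h0, if_neg, EReal.toReal_coe, if_false]
          linarith
      have hev2 : ∀ᶠ ν in atTop, ∀ i, |qseq ν i - q i| < ε := by
        rw [eventually_all]; intro i
        exact (hqc i).eventually (eventually_abs_sub_lt _ hε0)
      filter_upwards [hev0, hev1, hev2] with ν h0 h1 h2 hpos
      rw [wsumE]
      split
      · rw [EReal.add_top_of_ne_bot (hne0 _)]; exact le_top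
      · rename_i hw
        push_neg at hw
        have hterm : ∀ i, qseq ν i * (t i - ε) ≤ qseq ν i * (F i (xseq ν)).toReal := by
          intro i
          rcases eq_or_lt_of_le (hpos i) with h | h
          · rw [← h]; simp
          · have hne : F i (xseq ν) ≠ ⊤ := hw i (ne_of_gt h)
            have hlt : t i - ε < (F i (xseq ν)).toReal := by
              rw [← EReal.coe_lt_coe_iff, EReal.coe_toReal hne (hneF _ _)]; exact h1 i
            exact mul_le_mul_of_nonneg_left hlt.le (hpos i)
        have hsum1 : ∑ i, qseq ν i * (t i - ε) ≤ ∑ i, qseq ν i * (F i (xseq ν)).toReal :=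
          Finset.sum_le_sum fun i _ => hterm i
        have hsum2 : ∑ i, q i * t i - ε * C ≤ ∑ i, qseq ν i * (t i - ε) := by
          have e1 : ∀ i ∈ Finset.univ, q i * t i - ε * |t i| - ε * q i - ε * ε
              ≤ qseq ν i * (t i - ε) := by
            intro i _
            have hd1 : -(ε * |t i|) ≤ (qseq ν i - q i) * t i := by
              calc -(ε*|t i|) ≤ -(|qseq ν i - q i| * |t i|) :=
                    neg_le_neg (mul_le_mul_of_nonneg_right (h2 i).le (abs_nonneg _))
                _ = -|(qseq ν i - q i) * t i| := by rw [abs_mul]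
                _ ≤ (qseq ν i - q i) * t i := neg_abs_le _
            have hd2 : qseq ν i - q i < ε := (abs_lt.mp (h2 i)).2
            have hd3 : (qseq ν i - q i) * ε < ε * ε := mul_lt_mul_of_pos_right hd2 hε0
            nlinarith [hd1, hd3]
          have hsumle := Finset.sum_le_sum e1
          have hexp : ∑ i, (q i * t i - ε * |t i| - ε * q i - ε * ε)
              = ∑ i, q i * t i - ε * ∑ i, |t i| - ε * ∑ i, q i - (s:ℝ) * (ε * ε) := by
            rw [Finset.sum_sub_distrib, Finset.sum_sub_distrib, Finset.sum_sub_distrib,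
              ← Finset.mul_sum, ← Finset.mul_sum, Finset.sum_const, Finset.card_univ,
              Fintype.card_fin, nsmul_eq_mul]
          rw [hexp] at hsumle
          have hee : (s:ℝ) * (ε * ε) ≤ (s:ℝ) * ε :=
            by nlinarith [mul_nonneg (mul_nonneg hs0 hε0.le) (sub_nonneg.mpr hε1)]
          have hCle : ε * (∑ i, |t i|) + ε * (∑ i, q i) + (s:ℝ) * ε = ε * C := by
            rw [hC]; ring
          linarith [hsumle, hee]
        have hle : m - ((f₀ x).toReal - ε)
            ≤ ∑ i, qseq ν i * (F i (xseq ν)).toReal := by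
          have hgap : ε * (1 + C) < r - m := by linarith
          rw [hr] at hgap
          linarith [hsum1, hsum2]
        have hme : (m : EReal)
            = (((f₀ x).toReal - ε : ℝ) : EReal) + ((m - ((f₀ x).toReal - ε) : ℝ) : EReal) := by
          rw [← EReal.coe_add]; norm_num
        rw [hme]
        exact add_le_add h0.le (EReal.coe_le_coe_iff.mpr hle)

/-- With `f(u,x) = f₀(x) + Σᵢ(pᵢ+uᵢ)fᵢ(x) + θ‖u‖₁ + ι_Δ(p+u)` and
`f^ν(u,x) = f₀(x) + Σᵢ(pᵢ^ν+uᵢ)fᵢ(x) + θ‖u‖₁ + ι_Δ(p^ν+u)`, if `‖p^ν − p‖₂ → 0` then `f^ν`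
epi-converges to `f`, for every `θ ≥ 0`. -/
theorem stmt14 {s n : ℕ}
    (f₀ : EuclideanSpace ℝ (Fin n) → EReal)
    (F : Fin s → EuclideanSpace ℝ (Fin n) → EReal)
    (hf₀proper : (∀ x, f₀ x ≠ ⊥) ∧ (∃ x, f₀ x ≠ ⊤)) (hf₀lsc : LowerSemicontinuous f₀)
    (hFproper : ∀ i, (∀ x, F i x ≠ ⊥) ∧ (∃ x, F i x ≠ ⊤))
    (hFlsc : ∀ i, LowerSemicontinuous (F i))
    (η : ℝ) (hη : 0 ≤ η)
    (xb : EuclideanSpace ℝ (Fin n)) (hfinb : f₀ xb ≠ ⊤ ∧ ∀ i, F i xb ≠ ⊤)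
    (hlb : (∀ x, -((η : ℝ) : EReal) ≤ f₀ x) ∧ ∀ i x, -((η : ℝ) : EReal) ≤ F i x)
    (p : EuclideanSpace ℝ (Fin s)) (hp : (∀ i, 0 ≤ p i) ∧ ∑ i, p i = 1)
    (pν : ℕ → EuclideanSpace ℝ (Fin s)) (hpν : ∀ ν, (∀ i, 0 ≤ pν ν i) ∧ ∑ i, pν ν i = 1)
    (hpconv : Tendsto (fun ν => ‖pν ν - p‖) atTop (𝓝 0))
    (θ : ℝ) (hθ : 0 ≤ θ) :
    -- liminf condition of epi-convergence
    (∀ (u : EuclideanSpace ℝ (Fin s)) (x : EuclideanSpace ℝ (Fin n))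
       (useq : ℕ → EuclideanSpace ℝ (Fin s)) (xseq : ℕ → EuclideanSpace ℝ (Fin n)),
       Tendsto useq atTop (𝓝 u) → Tendsto xseq atTop (𝓝 x) →
       (if (∀ i, 0 ≤ p i + u i) ∧ ∑ i, (p i + u i) = 1 then
          f₀ x + wsumE (fun i => p i + u i) (fun i => F i x) + ((θ * ∑ i, |u i| : ℝ) : EReal)
        else ⊤) ≤
         Filter.liminf (fun ν =>
           if (∀ i, 0 ≤ pν ν i + useq ν i) ∧ ∑ i, (pν ν i + useq ν i) = 1 then
             f₀ (xseq ν) + wsumE (fun i => pν ν i + useq ν i) (fun i => F i (xseq ν))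
               + ((θ * ∑ i, |useq ν i| : ℝ) : EReal)
           else ⊤) atTop) ∧
    -- limsup (recovery sequence) condition of epi-convergence
    (∀ (u : EuclideanSpace ℝ (Fin s)) (x : EuclideanSpace ℝ (Fin n)),
       ∃ (useq : ℕ → EuclideanSpace ℝ (Fin s)) (xseq : ℕ → EuclideanSpace ℝ (Fin n)),
         Tendsto useq atTop (𝓝 u) ∧ Tendsto xseq atTop (𝓝 x) ∧
         Filter.limsup (fun ν =>
           if (∀ i, 0 ≤ pν ν i + useq ν i) ∧ ∑ i, (pν ν i + useq ν i) = 1 then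
             f₀ (xseq ν) + wsumE (fun i => pν ν i + useq ν i) (fun i => F i (xseq ν))
               + ((θ * ∑ i, |useq ν i| : ℝ) : EReal)
           else ⊤) atTop ≤
         (if (∀ i, 0 ≤ p i + u i) ∧ ∑ i, (p i + u i) = 1 then
            f₀ x + wsumE (fun i => p i + u i) (fun i => F i x)
              + ((θ * ∑ i, |u i| : ℝ) : EReal)
          else ⊤)) := by
  have hlb0 : ∀ x, ((-η : ℝ) : EReal) ≤ f₀ x := by
    intro x; rw [EReal.coe_neg]; exact hlb.1 x
  have hlbF : ∀ i x, ((-η : ℝ) : EReal) ≤ F i x := by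
    intro i x; rw [EReal.coe_neg]; exact hlb.2 i x
  have hne0 : ∀ y, f₀ y ≠ ⊥ := fun y => ne_bot_of_lb' (hlb0 y)
  have hneF : ∀ i y, F i y ≠ ⊥ := fun i y => ne_bot_of_lb' (hlbF i y)
  have hpt : Tendsto pν atTop (𝓝 p) := tendsto_iff_norm_sub_tendsto_zero.2 hpconv
  have hptc : ∀ i, Tendsto (fun ν => pν ν i) atTop (𝓝 (p i)) := fun i =>
    ((EuclideanSpace.proj (𝕜 := ℝ) i).continuous.tendsto p).comp hpt
  constructor
  · -- liminf condition
    intro u x useq xseq hu hx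
    have huc : ∀ i, Tendsto (fun ν => useq ν i) atTop (𝓝 (u i)) := fun i =>
      ((EuclideanSpace.proj (𝕜 := ℝ) i).continuous.tendsto u).comp hu
    have hqc : ∀ i, Tendsto (fun ν => pν ν i + useq ν i) atTop (𝓝 (p i + u i)) :=
      fun i => (hptc i).add (huc i)
    by_cases hcond : (∀ i, 0 ≤ p i + u i) ∧ ∑ i, (p i + u i) = 1
    · rw [if_pos hcond]
      by_contra hlt
      push_neg at hlt
      obtain ⟨m, hm1, hm2⟩ := EReal.exists_between_coe_real hlt
      set cθ : ℝ := θ * ∑ i, |u i| with hcθ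
      have hm2' : ((m - cθ : ℝ) : EReal)
          < f₀ x + wsumE (fun i => p i + u i) (fun i => F i x) := by
        by_contra hge
        push_neg at hge
        have h3 : f₀ x + wsumE (fun i => p i + u i) (fun i => F i x) + ((cθ : ℝ) : EReal)
            ≤ ((m - cθ : ℝ) : EReal) + ((cθ : ℝ) : EReal) := add_le_add hge le_rfl
        rw [← EReal.coe_add, show m - cθ + cθ = m by ring] at h3
        exact absurd (hm2.trans_le h3) (lt_irrefl _)
      obtain ⟨m₁, hm₁a, hm₁b⟩ := EReal.exists_between_coe_real hm2'
      have hkey := key_liminf f₀ F hf₀lsc hFlsc hη hlb0 hlbF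
        (q := fun i => p i + u i) (fun i => hcond.1 i) hx
        (qseq := fun ν i => pν ν i + useq ν i) hqc hm₁b
      have hS : Tendsto (fun ν => θ * ∑ i, |useq ν i|) atTop (𝓝 cθ) := by
        rw [hcθ]
        exact (tendsto_finset_sum _ fun i _ =>
          (continuous_abs.tendsto (u i)).comp (huc i)).const_mul θ
      have hm₁a' : m - m₁ < cθ := by
        rw [EReal.coe_lt_coe_iff] at hm₁a; linarith
      have hev2 : ∀ᶠ ν in atTop, m - m₁ < θ * ∑ i, |useq ν i| :=
        hS.eventually_const_lt hm₁a'
      have hev : ∀ᶠ ν in atTop, (m : EReal) ≤ (fun ν =>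
          if (∀ i, 0 ≤ pν ν i + useq ν i) ∧ ∑ i, (pν ν i + useq ν i) = 1 then
            f₀ (xseq ν) + wsumE (fun i => pν ν i + useq ν i) (fun i => F i (xseq ν))
              + ((θ * ∑ i, |useq ν i| : ℝ) : EReal)
          else ⊤) ν := by
        filter_upwards [hkey, hev2] with ν h1 h2
        by_cases hcν : (∀ i, 0 ≤ pν ν i + useq ν i) ∧ ∑ i, (pν ν i + useq ν i) = 1
        · simp only [if_pos hcν]
          have hme : (m : EReal) = (m₁ : EReal) + ((m - m₁ : ℝ) : EReal) := by
            rw [← EReal.coe_add]; norm_num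
          rw [hme]
          exact add_le_add (h1 hcν.1) (EReal.coe_le_coe_iff.mpr h2.le)
        · simp only [if_neg hcν]; exact le_top
      exact absurd (le_liminf_of_le (by isBoundedDefault) hev) (not_le.mpr hm1)
    · rw [if_neg hcond]
      have hev : ∀ᶠ ν in atTop,
          ¬((∀ i, 0 ≤ pν ν i + useq ν i) ∧ ∑ i, (pν ν i + useq ν i) = 1) := by
        rw [not_and_or] at hcond
        rcases hcond with h | h
        · push_neg at h
          obtain ⟨i, hi⟩ := h
          filter_upwards [(hqc i).eventually_lt_const hi] with ν hν hc
          exact absurd (hc.1 i) (not_le.mpr hν)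
        · have hsum : Tendsto (fun ν => ∑ i, (pν ν i + useq ν i)) atTop
              (𝓝 (∑ i, (p i + u i))) := tendsto_finset_sum _ fun i _ => hqc i
          filter_upwards [hsum.eventually (eventually_ne_nhds h)] with ν hν hc
          exact hν hc.2
      refine le_liminf_of_le (by isBoundedDefault) ?_
      filter_upwards [hev] with ν hν
      rw [if_neg hν]
  · -- limsup condition
    intro u x
    refine ⟨fun ν => u + (p - pν ν), fun _ => x, ?_, tendsto_const_nhds, ?_⟩
    · have : Tendsto (fun ν => u + (p - pν ν)) atTop (𝓝 (u + (p - p))) :=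
        tendsto_const_nhds.add (tendsto_const_nhds.sub hpt)
      simpa using this
    · have hus : Tendsto (fun ν => u + (p - pν ν)) atTop (𝓝 u) := by
        have : Tendsto (fun ν => u + (p - pν ν)) atTop (𝓝 (u + (p - p))) :=
          tendsto_const_nhds.add (tendsto_const_nhds.sub hpt)
        simpa using this
      have hcoord : ∀ ν i, pν ν i + (u + (p - pν ν)) i = p i + u i := by
        intro ν i
        simp only [PiLp.add_apply, PiLp.sub_apply]
        ring
      have hfun : ∀ ν, (if (∀ i, 0 ≤ pν ν i + (u + (p - pν ν)) i)
              ∧ ∑ i, (pν ν i + (u + (p - pν ν)) i) = 1 then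
            f₀ x + wsumE (fun i => pν ν i + (u + (p - pν ν)) i) (fun i => F i x)
              + ((θ * ∑ i, |(u + (p - pν ν)) i| : ℝ) : EReal)
          else ⊤)
          = (if (∀ i, 0 ≤ p i + u i) ∧ ∑ i, (p i + u i) = 1 then
            f₀ x + wsumE (fun i => p i + u i) (fun i => F i x)
              + ((θ * ∑ i, |(u + (p - pν ν)) i| : ℝ) : EReal)
          else ⊤) := by
        intro ν
        simp only [hcoord]
      simp only [hfun]
      by_cases hcond : (∀ i, 0 ≤ p i + u i) ∧ ∑ i, (p i + u i) = 1
      · simp only [if_pos hcond]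
        set K : EReal := f₀ x + wsumE (fun i => p i + u i) (fun i => F i x) with hK
        by_cases hKtop : K = ⊤
        · rw [hKtop, EReal.top_add_of_ne_bot (EReal.coe_ne_bot _)]
          exact le_top
        · have hKbot : K ≠ ⊥ := by
            rw [hK]
            rw [Ne, EReal.add_eq_bot_iff]
            push_neg
            refine ⟨hne0 x, ?_⟩
            rw [wsumE]
            split
            · exact top_ne_bot
            · exact EReal.coe_ne_bot _
          have hKr : K = ((K.toReal : ℝ) : EReal) := (EReal.coe_toReal hKtop hKbot).symm
          have habs : ∀ i, Tendsto (fun ν => |(u + (p - pν ν)) i|) atTop (𝓝 (|u i|)) :=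
            fun i => (continuous_abs.tendsto (u i)).comp
              (((EuclideanSpace.proj (𝕜 := ℝ) i).continuous.tendsto u).comp hus)
          have hreal : Tendsto (fun ν => K.toReal + θ * ∑ i, |(u + (p - pν ν)) i|) atTop
              (𝓝 (K.toReal + θ * ∑ i, |u i|)) :=
            tendsto_const_nhds.add ((tendsto_finset_sum _ fun i _ => habs i).const_mul θ)
          have htend : Tendsto (fun ν =>
              K + ((θ * ∑ i, |(u + (p - pν ν)) i| : ℝ) : EReal)) atTop
              (𝓝 (K + ((θ * ∑ i, |u i| : ℝ) : EReal))) := by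
            rw [hKr]
            have := (continuous_coe_real_ereal.tendsto _).comp hreal
            simp only [Function.comp_def, EReal.coe_add] at this
            exact this
          exact le_of_eq htend.limsup_eq
      · simp only [if_neg hcond]
        exact le_top
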